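/- Let p/q be a fraction in lowest terms with q ≥ 1. Then there exists a unique finite sequence of fractions in lowest terms p₀/q₀, p₁/q₁, …, p_n/q_n (the length n included) such that: p_n/q_n = p/q; q₀ = 1; q₀ < q₁ < ⋯ < q_n; p₀/q₀ < p₁/q₁ < ⋯ < p_n/q_n; and |p_k·q_{k−1} − q_k·p_{k−1}| = 1 for every 1 ≤ k ≤ n. Moreover, for this sequence p₀/q₀ = ⌊p/q⌋. -/

import Mathlib

/-- `IsDecBasicEdgepath p q n P Q` says that the fractions
`P 0 / Q 0, P 1 / Q 1, …, P n / Q n` (all in lowest terms, with positive denominators)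
form the vertex sequence of a monotonically decreasing basic edgepath ending at `p/q`:
it ends at `p/q`, starts at denominator `1`, has strictly increasing denominators,
strictly increasing values, and consecutive fractions are Farey neighbours
(`|p_k·q_{k−1} − q_k·p_{k−1}| = 1`). -/
def IsDecBasicEdgepath (p q : ℤ) (n : ℕ) (P Q : ℕ → ℤ) : Prop :=
  P n = p ∧ Q n = q ∧ Q 0 = 1 ∧
  (∀ k ≤ n, Int.gcd (P k) (Q k) = 1 ∧ 1 ≤ Q k) ∧
  (∀ k < n, Q k < Q (k + 1)) ∧
  (∀ k < n, (P k : ℚ) / (Q k : ℚ) < (P (k + 1) : ℚ) / (Q (k + 1) : ℚ)) ∧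
  (∀ k < n, |P (k + 1) * Q k - Q (k + 1) * P k| = 1)



/-- Sign of the determinant from the value inequality. -/
lemma det_pos (x y p q : ℤ) (hy : 0 < y) (hq : 0 < q)
    (hv : (x:ℚ)/(y:ℚ) < (p:ℚ)/(q:ℚ)) (habs : |p * y - q * x| = 1) :
    p * y - q * x = 1 := by
  have hy0 : (0:ℚ) < (y:ℚ) := by exact_mod_cast hy
  have hq0 : (0:ℚ) < (q:ℚ) := by exact_mod_cast hq
  rw [div_lt_div_iff₀ hy0 hq0] at hv
  have h : x * q < p * y := by exact_mod_cast hv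
  have h' : q * x < p * y := by linarith [mul_comm x q]
  rcases abs_eq (by norm_num : (0:ℤ) ≤ 1) |>.mp habs with h1 | h1 <;> linarith

/-- The floor is preserved along an edge. -/
lemma floor_step (x y p q : ℤ) (hy : 1 ≤ y) (hyq : y < q) (hdet : p * y - q * x = 1) :
    ⌊(p:ℚ)/(q:ℚ)⌋ = ⌊(x:ℚ)/(y:ℚ)⌋ := by
  have hy0 : (0:ℚ) < (y:ℚ) := by exact_mod_cast hy
  have hq0 : (0:ℚ) < (q:ℚ) := by
    have : (1:ℤ) < q := by omega
    exact_mod_cast lt_trans one_pos (by exact_mod_cast this)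
  set m := ⌊(x:ℚ)/(y:ℚ)⌋ with hm
  have h1 : (m:ℚ) ≤ (x:ℚ)/(y:ℚ) := Int.floor_le _
  have h2 : (x:ℚ)/(y:ℚ) < (m:ℚ) + 1 := Int.lt_floor_add_one _
  rw [le_div_iff₀ hy0] at h1
  rw [div_lt_iff₀ hy0] at h2
  have h1' : m * y ≤ x := by exact_mod_cast h1
  have h2' : x < (m + 1) * y := by
    have : (x:ℚ) < ((m + 1 : ℤ) : ℚ) * (y:ℚ) := by push_cast; linarith
    exact_mod_cast this
  have hlow : m * q ≤ p := by nlinarith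
  have hhigh : p < (m + 1) * q := by nlinarith
  rw [Int.floor_eq_iff]
  constructor
  · rw [le_div_iff₀ hq0]; exact_mod_cast hlow
  · rw [div_lt_iff₀ hq0]
    have : (p:ℚ) < ((m + 1 : ℤ) : ℚ) * (q:ℚ) := by exact_mod_cast hhigh
    push_cast at this ⊢; linarith

/-- Uniqueness of the Farey predecessor. -/
lemma pred_unique (p q x y x' y' : ℤ) (hpq : Int.gcd p q = 1)
    (hy : 1 ≤ y) (hyq : y < q) (hy' : 1 ≤ y') (hyq' : y' < q)
    (h : p * y - q * x = 1) (h' : p * y' - q * x' = 1) : x = x' ∧ y = y' := by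
  have hco : IsCoprime p q := Int.isCoprime_iff_gcd_eq_one.mpr hpq
  have hdvd : q ∣ p * (y - y') := ⟨x - x', by ring_nf; omega⟩
  have hq : q ∣ y - y' := (hco.symm.dvd_of_dvd_mul_left) hdvd
  have hyy : y = y' := by
    rcases hq with ⟨c, hc⟩
    have : c = 0 := by nlinarith
    rw [this, mul_zero] at hc; omega
  subst hyy
  constructor
  · have : q * x = q * x' := by omega
    have hq0 : q ≠ 0 := by omega
    exact mul_left_cancel₀ hq0 this
  · rfl

/-- Existence of the predecessor. -/
lemma exists_pred (p q : ℤ) (hq : 2 ≤ q) (hpq : Int.gcd p q = 1) :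
    ∃ x y : ℤ, 1 ≤ y ∧ y < q ∧ p * y - q * x = 1 ∧ Int.gcd x y = 1 := by
  have hb : (Int.gcd p q : ℤ) = p * Int.gcdA p q + q * Int.gcdB p q := Int.gcd_eq_gcd_ab p q
  rw [hpq] at hb
  set a := Int.gcdA p q with ha
  set y := a % q with hy
  have hq0 : q ≠ 0 := by omega
  have hy0 : 0 ≤ y := Int.emod_nonneg a hq0
  have hyq : y < q := Int.emod_lt_of_pos a (by omega)
  have hdvd : q ∣ p * y - 1 := by
    have : p * y - 1 = p * (a - q * (a / q)) - 1 := by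
      rw [hy]; congr 1; congr 1; rw [Int.emod_def]
    rw [this]
    have : p * (a - q * (a / q)) - 1 = -q * Int.gcdB p q - q * (p * (a / q)) := by
      push_cast at hb; ring_nf; ring_nf at hb; linarith
    rw [this]
    exact Dvd.dvd.sub ⟨-Int.gcdB p q, by ring⟩ ⟨p * (a / q), rfl⟩
  obtain ⟨x, hx⟩ := hdvd
  have hdet : p * y - q * x = 1 := by omega
  have hy1 : 1 ≤ y := by
    rcases eq_or_lt_of_le hy0 with h | h
    · exfalso
      have : q * x = -1 := by rw [← h] at hdet; linarith
      have : q ∣ 1 := ⟨-x, by linarith⟩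
      have := Int.le_of_dvd one_pos this
      omega
    · omega
  refine ⟨x, y, hy1, hyq, hdet, ?_⟩
  rw [← Int.isCoprime_iff_gcd_eq_one]
  exact ⟨-q, p, by linarith⟩

lemma exists_edgepath : ∀ m : ℕ, ∀ p q : ℤ, 1 ≤ q → q ≤ (m:ℤ) → Int.gcd p q = 1 →
    ∃ n P Q, IsDecBasicEdgepath p q n P Q := by
  intro m
  induction m with
  | zero => intro p q h1 h2 _; exfalso; omega
  | succ m ih =>
    intro p q h1 h2 hgcd
    rcases eq_or_lt_of_le h1 with hq1 | hq1
    · refine ⟨0, fun _ => p, fun _ => 1, by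
        refine ⟨rfl, hq1, rfl, fun k _ => ⟨by simpa [← hq1] using hgcd, le_refl 1⟩, ?_, ?_, ?_⟩ <;>
        · intro k hk; exact absurd hk (Nat.not_lt_zero k)⟩
    · obtain ⟨x, y, hy1, hyq, hdet, hxy⟩ := exists_pred p q (by omega) hgcd
      obtain ⟨n, P, Q, hP⟩ := ih x y hy1 (by push_cast; omega) hxy
      obtain ⟨hPn, hQn, hQ0, hlt, hmono, hval, habs⟩ := hP
      refine ⟨n + 1, fun k => if k ≤ n then P k else p, fun k => if k ≤ n then Q k else q,
        ?_, ?_, ?_, ?_, ?_, ?_, ?_⟩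
      · simp
      · simp
      · simp [hQ0]
      · intro k hk
        by_cases h : k ≤ n
        · simpa [h] using hlt k h
        · have : k = n + 1 := by omega
          simp [h, hgcd]; omega
      · intro k hk
        by_cases h : k < n
        · simp [Nat.le_of_lt h, Nat.succ_le_of_lt h, show k + 1 ≤ n from h]
          exact hmono k h
        · have hk' : k = n := by omega
          subst hk'
          simp [hQn]; omega
      · intro k hk
        by_cases h : k < n
        · simp only [Nat.le_of_lt h, if_pos, show k + 1 ≤ n from h, if_true]
          exact hval k h
        · have hk' : k = n := by omega
          subst hk'
          beta_reduce
          rw [if_pos (le_refl k), if_pos (le_refl k), if_neg (by omega), if_neg (by omega),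
            hPn, hQn]
          rw [div_lt_div_iff₀ (by exact_mod_cast (show (0:ℤ) < y by omega))
            (by exact_mod_cast (show (0:ℤ) < q by omega))]
          exact_mod_cast (show x * q < p * y by nlinarith)
      · intro k hk
        by_cases h : k < n
        · simp only [Nat.le_of_lt h, if_pos, show k + 1 ≤ n from h, if_true]
          exact habs k h
        · have hk' : k = n := by omega
          subst hk'
          beta_reduce
          rw [if_pos (le_refl k), if_pos (le_refl k), if_neg (by omega), if_neg (by omega),
            hPn, hQn]
          rw [abs_eq (by norm_num : (0:ℤ) ≤ 1)]
          left; linarith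

/-- Any edgepath starts at the floor. -/
lemma floor_of_edgepath (p q : ℤ) (n : ℕ) (P Q : ℕ → ℤ)
    (h : IsDecBasicEdgepath p q n P Q) : (P 0 : ℤ) = ⌊(p:ℚ)/(q:ℚ)⌋ := by
  obtain ⟨hPn, hQn, hQ0, hlt, hmono, hval, habs⟩ := h
  have key : ∀ j ≤ n, ⌊(P j : ℚ)/(Q j : ℚ)⌋ = ⌊(P 0 : ℚ)/(Q 0 : ℚ)⌋ := by
    intro j
    induction j with
    | zero => intro _; rfl
    | succ j ihj =>
      intro hj
      have hjn : j < n := hj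
      have hdet : P (j+1) * Q j - Q (j+1) * P j = 1 :=
        det_pos (P j) (Q j) (P (j+1)) (Q (j+1))
          (by have := (hlt j (le_of_lt hjn)).2; omega)
          (by have := (hlt (j+1) hj).2; omega)
          (hval j hjn) (habs j hjn)
      rw [floor_step (P j) (Q j) (P (j+1)) (Q (j+1)) (hlt j (le_of_lt hjn)).2
        (by have := (hlt j (le_of_lt hjn)).2; exact hmono j hjn) hdet]
      exact ihj (le_of_lt hjn)
  have := key n (le_refl n)
  rw [hPn, hQn] at this
  rw [this, hQ0]
  push_cast
  rw [div_one, Int.floor_intCast]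

/-- Uniqueness of edgepaths. -/
lemma unique_edgepath : ∀ m : ℕ, ∀ p q : ℤ, 1 ≤ q → q ≤ (m:ℤ) →
    ∀ n P Q n' P' Q', IsDecBasicEdgepath p q n P Q → IsDecBasicEdgepath p q n' P' Q' →
    n = n' ∧ ∀ k ≤ n, P' k = P k ∧ Q' k = Q k := by
  intro m
  induction m with
  | zero => intro p q h1 h2; exfalso; omega
  | succ m ih =>
    intro p q h1 h2 n P Q n' P' Q' h h'
    obtain ⟨hPn, hQn, hQ0, hlt, hmono, hval, habs⟩ := h
    obtain ⟨hPn', hQn', hQ0', hlt', hmono', hval', habs'⟩ := h'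
    have hgcd : Int.gcd p q = 1 := by rw [← hPn, ← hQn]; exact (hlt n (le_refl n)).1
    rcases eq_or_lt_of_le h1 with hq1 | hq1
    · -- q = 1 : both paths have length 0
      have hn : n = 0 := by
        by_contra hn0
        have h1n : n - 1 < n := by omega
        have := hmono (n-1) h1n
        have h2n : n - 1 + 1 = n := by omega
        rw [h2n, hQn, ← hq1] at this
        have := (hlt (n-1) (le_of_lt h1n)).2
        omega
      have hn' : n' = 0 := by
        by_contra hn0
        have h1n : n' - 1 < n' := by omega
        have := hmono' (n'-1) h1n
        have h2n : n' - 1 + 1 = n' := by omega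
        rw [h2n, hQn', ← hq1] at this
        have := (hlt' (n'-1) (le_of_lt h1n)).2
        omega
      subst hn; subst hn'
      refine ⟨rfl, fun k hk => ?_⟩
      have hk0 : k = 0 := Nat.le_zero.mp hk
      subst hk0
      exact ⟨by rw [hPn', hPn], by rw [hQn', hQn]⟩
    · -- q ≥ 2 : both paths have length ≥ 1
      have hn : n ≠ 0 := by
        intro hn0; subst hn0; rw [hQn] at hQ0; omega
      have hn' : n' ≠ 0 := by
        intro hn0; subst hn0; rw [hQn'] at hQ0'; omega
      obtain ⟨nn, rfl⟩ : ∃ nn, n = nn + 1 := ⟨n - 1, by omega⟩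
      obtain ⟨nn', rfl⟩ : ∃ nn', n' = nn' + 1 := ⟨n' - 1, by omega⟩
      -- predecessors
      have hdet : p * Q nn - q * P nn = 1 := by
        have := det_pos (P nn) (Q nn) (P (nn+1)) (Q (nn+1))
          (by have := (hlt nn (by omega)).2; omega)
          (by have := (hlt (nn+1) (le_refl _)).2; omega)
          (hval nn (by omega)) (habs nn (by omega))
        rw [hPn, hQn] at this; exact this
      have hdet' : p * Q' nn' - q * P' nn' = 1 := by
        have := det_pos (P' nn') (Q' nn') (P' (nn'+1)) (Q' (nn'+1))
          (by have := (hlt' nn' (by omega)).2; omega)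
          (by have := (hlt' (nn'+1) (le_refl _)).2; omega)
          (hval' nn' (by omega)) (habs' nn' (by omega))
        rw [hPn', hQn'] at this; exact this
      have hQnq : Q nn < q := by have := hmono nn (by omega); rw [hQn] at this; omega
      have hQnq' : Q' nn' < q := by have := hmono' nn' (by omega); rw [hQn'] at this; omega
      have hQ1 : 1 ≤ Q nn := (hlt nn (by omega)).2
      have hQ1' : 1 ≤ Q' nn' := (hlt' nn' (by omega)).2
      obtain ⟨hxx, hyy⟩ := pred_unique p q (P nn) (Q nn) (P' nn') (Q' nn') hgcd
        hQ1 hQnq hQ1' hQnq' hdet hdet'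
      -- truncated paths
      have htr : IsDecBasicEdgepath (P nn) (Q nn) nn P Q :=
        ⟨rfl, rfl, hQ0, fun k hk => hlt k (by omega), fun k hk => hmono k (by omega),
          fun k hk => hval k (by omega), fun k hk => habs k (by omega)⟩
      have htr' : IsDecBasicEdgepath (P nn) (Q nn) nn' P' Q' := by
        rw [hxx, hyy]
        exact ⟨rfl, rfl, hQ0', fun k hk => hlt' k (by omega), fun k hk => hmono' k (by omega),
          fun k hk => hval' k (by omega), fun k hk => habs' k (by omega)⟩
      obtain ⟨hnn, hkk⟩ := ih (P nn) (Q nn) hQ1 (by push_cast; omega) nn P Q nn' P' Q' htr htr'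
      subst hnn
      refine ⟨rfl, fun k hk => ?_⟩
      by_cases hkle : k ≤ nn
      · exact hkk k hkle
      · have : k = nn + 1 := by omega
        subst this
        exact ⟨by rw [hPn', hPn], by rw [hQn', hQn]⟩

/-- For every fraction `p/q` in lowest terms with `q ≥ 1` there is a unique finite
sequence of fractions in lowest terms `p₀/q₀ < p₁/q₁ < ⋯ < p_n/q_n = p/q` with `q₀ = 1`,
strictly increasing denominators, and `|p_k·q_{k−1} − q_k·p_{k−1}| = 1` for all `k`
(the monotonically decreasing basic edgepath of `p/q`); moreover `p₀/q₀ = ⌊p/q⌋`. -/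
theorem stmt7 (p q : ℤ) (hq : 1 ≤ q) (hpq : Int.gcd p q = 1) :
    ∃ (n : ℕ) (P Q : ℕ → ℤ),
      IsDecBasicEdgepath p q n P Q ∧
      (P 0 : ℚ) / (Q 0 : ℚ) = ((⌊(p : ℚ) / (q : ℚ)⌋ : ℤ) : ℚ) ∧
      ∀ (n' : ℕ) (P' Q' : ℕ → ℤ), IsDecBasicEdgepath p q n' P' Q' →
        n' = n ∧ ∀ k ≤ n, P' k = P k ∧ Q' k = Q k := by
  obtain ⟨n, P, Q, h⟩ := exists_edgepath q.toNat p q hq (by omega) hpq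
  refine ⟨n, P, Q, h, ?_, ?_⟩
  · have hf := floor_of_edgepath p q n P Q h
    obtain ⟨_, _, hQ0, _, _, _, _⟩ := h
    rw [hQ0]
    push_cast
    rw [div_one]
    exact_mod_cast hf
  · intro n' P' Q' h'
    obtain ⟨e, hk⟩ := unique_edgepath q.toNat p q hq (by omega) n P Q n' P' Q' h h'
    exact ⟨e.symm, hk⟩
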